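/- Let (P, ⪯, ∧) be a locally finite meet semilattice with a least element 0̂ (0̂ ⪯ x for all x ∈ P), and suppose there is a countable family of finite nonempty subsets S₁, S₂, … of P whose union is all of P. Then f : P → ℝ is positive definite if and only if for every x ∈ P, ∑_{y : y ⪯ x} f(y) μ_P(y, x) ≥ 0, where μ_P is the Möbius function of the incidence algebra of P. -/

import Mathlib

open Finset IncidenceAlgebra

section Aux

variable {P : Type*} [SemilatticeInf P] [OrderBot P] [LocallyFiniteOrder P] [DecidableEq P]

private lemma sum_mu_left (y t : P) :
    ∑ z ∈ Finset.Icc y t, mu ℝ y z = if y = t then (1 : ℝ) else 0 := by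
  classical
  have h1 : (mu ℝ * zeta ℝ : IncidenceAlgebra ℝ P) y t = (1 : IncidenceAlgebra ℝ P) y t := by
    rw [mu_mul_zeta]
  simp only [mul_apply, one_apply] at h1
  rw [← h1]
  refine Finset.sum_congr rfl fun z hz => ?_
  rw [zeta_apply, if_pos (Finset.mem_Icc.1 hz).2, mul_one]

private lemma sum_mu_right (u x : P) :
    ∑ z ∈ Finset.Icc u x, mu ℝ z x = if u = x then (1 : ℝ) else 0 := by
  classical
  have h1 : (zeta ℝ * mu ℝ : IncidenceAlgebra ℝ P) u x = (1 : IncidenceAlgebra ℝ P) u x := by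
    rw [zeta_mul_mu]
  simp only [mul_apply, one_apply] at h1
  rw [← h1]
  refine Finset.sum_congr rfl fun z hz => ?_
  rw [zeta_apply, if_pos (Finset.mem_Icc.1 hz).1, one_mul]

private lemma inversion (f : P → ℝ) (t : P) :
    ∑ z ∈ Finset.Icc (⊥ : P) t, ∑ y ∈ Finset.Icc (⊥ : P) z, f y * mu ℝ y z = f t := by
  rw [Finset.sum_comm' (t' := Finset.Icc (⊥ : P) t) (s' := fun y => Finset.Icc y t)
    (fun z y => by
      simp only [Finset.mem_Icc, bot_le, true_and]
      constructor
      · rintro ⟨hz, hy⟩; exact ⟨⟨hy, hz⟩, hy.trans hz⟩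
      · rintro ⟨⟨hy, hz⟩, _⟩; exact ⟨hz, hy⟩)]
  have : ∀ y ∈ Finset.Icc (⊥ : P) t,
      ∑ z ∈ Finset.Icc y t, f y * mu ℝ y z = if y = t then f y else 0 := by
    intro y _
    rw [← Finset.mul_sum, sum_mu_left, mul_ite, mul_one, mul_zero]
  rw [Finset.sum_congr rfl this, Finset.sum_ite_eq' _ t, if_pos (by simp)]

/-- The key quadratic-form factorization. -/
private lemma quad_form [DecidableRel ((· ≤ ·) : P → P → Prop)] (f : P → ℝ) (T : Finset P) (v : P → ℝ) :
    ∑ i ∈ T, ∑ j ∈ T, v i * (f (i ⊓ j) * v j) =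
      ∑ z ∈ T.biUnion (fun s => Finset.Icc ⊥ s),
        (∑ y ∈ Finset.Icc (⊥ : P) z, f y * mu ℝ y z) *
          (∑ i ∈ T.filter (fun i => z ≤ i), v i) ^ 2 := by
  classical
  set D := T.biUnion (fun s => Finset.Icc ⊥ s) with hD
  set g : P → ℝ := fun z => ∑ y ∈ Finset.Icc (⊥ : P) z, f y * mu ℝ y z with hg
  have key : ∀ i ∈ T, ∀ j ∈ T, f (i ⊓ j) = ∑ z ∈ D,
      (if z ≤ i then (1 : ℝ) else 0) * (if z ≤ j then (1 : ℝ) else 0) * g z := by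
    intro i hi j hj
    have : ∀ z ∈ D, (if z ≤ i then (1 : ℝ) else 0) * (if z ≤ j then (1 : ℝ) else 0) * g z
        = if z ≤ i ∧ z ≤ j then g z else 0 := by
      intro z _
      by_cases h1 : z ≤ i <;> by_cases h2 : z ≤ j <;> simp [h1, h2]
    rw [Finset.sum_congr rfl this, ← Finset.sum_filter]
    have hfil : D.filter (fun z => z ≤ i ∧ z ≤ j) = Finset.Icc (⊥ : P) (i ⊓ j) := by
      ext z
      simp only [Finset.mem_filter, Finset.mem_Icc, bot_le, true_and, hD,
        Finset.mem_biUnion]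
      constructor
      · rintro ⟨_, h1, h2⟩; exact le_inf h1 h2
      · intro h; exact ⟨⟨i, hi, by simp [h.trans inf_le_left]⟩,
          h.trans inf_le_left, h.trans inf_le_right⟩
    rw [hfil, inversion f (i ⊓ j)]
  calc ∑ i ∈ T, ∑ j ∈ T, v i * (f (i ⊓ j) * v j)
      = ∑ i ∈ T, ∑ j ∈ T, ∑ z ∈ D,
          (if z ≤ i then v i else 0) * ((if z ≤ j then v j else 0) * g z) := by
        refine Finset.sum_congr rfl fun i hi => Finset.sum_congr rfl fun j hj => ?_
        rw [key i hi j hj, Finset.sum_mul, Finset.mul_sum]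
        refine Finset.sum_congr rfl fun z _ => ?_
        split_ifs <;> ring
    _ = ∑ z ∈ D, ∑ i ∈ T, ∑ j ∈ T,
          (if z ≤ i then v i else 0) * ((if z ≤ j then v j else 0) * g z) := by
        rw [Finset.sum_congr rfl fun i (_ : i ∈ T) => Finset.sum_comm (s := T) (t := D)
          (f := fun j z => (if z ≤ i then v i else 0) * ((if z ≤ j then v j else 0) * g z))]
        exact Finset.sum_comm
    _ = ∑ z ∈ D, g z * (∑ i ∈ T.filter (fun i => z ≤ i), v i) ^ 2 := by
        refine Finset.sum_congr rfl fun z _ => ?_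
        have : ∀ i ∈ T, ∑ j ∈ T, (if z ≤ i then v i else 0) * ((if z ≤ j then v j else 0) * g z)
            = (if z ≤ i then v i else 0) * ((∑ j ∈ T.filter (fun j => z ≤ j), v j) * g z) := by
          intro i _
          rw [← Finset.mul_sum, ← Finset.sum_mul, Finset.sum_filter]
        rw [Finset.sum_congr rfl this, ← Finset.sum_mul, Finset.sum_filter]
        ring

end Aux

/-- A function `f : P → ℝ` on a meet semilattice is *positive definite* if for every
finite nonempty subset `S ⊆ P` the meet matrix `(S)_f`, with entries `f (x ⊓ y)` for
`x, y ∈ S`, is positive semidefinite. -/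
def IsPosDefOnMeets {P : Type*} [SemilatticeInf P] (f : P → ℝ) : Prop :=
  ∀ S : Finset P, S.Nonempty →
    (Matrix.of fun x y : S => f (x.1 ⊓ y.1)).PosSemidef

/-- Let `(P, ⪯, ∧)` be a locally finite meet semilattice with a least
element `⊥`, admitting a countable covering by finite nonempty subsets `S₁, S₂, …`.
Then `f : P → ℝ` is positive definite iff for every `x ∈ P` one has
`∑_{y ⪯ x} f(y) μ_P(y, x) ≥ 0`, where `μ_P` is the Möbius function of the incidence
algebra of `P`. -/
theorem posDef_iff_moebius_sum_nonneg
    {P : Type*} [SemilatticeInf P] [OrderBot P] [LocallyFiniteOrder P] [DecidableEq P]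
    (S : ℕ → Finset P) (hne : ∀ m, (S m).Nonempty)
    (hcov : ∀ x : P, ∃ m, x ∈ S m) (f : P → ℝ) :
    IsPosDefOnMeets f ↔
      ∀ x : P, 0 ≤ ∑ y ∈ Finset.Icc (⊥ : P) x, f y * IncidenceAlgebra.mu ℝ y x := by
  classical
  constructor
  · intro h x
    have hxmem : (⊥ : P) ∈ Finset.Icc (⊥ : P) x := by simp
    obtain ⟨hherm, hquad⟩ := Matrix.posSemidef_iff_dotProduct_mulVec.mp (h (Finset.Icc (⊥ : P) x) ⟨⊥, hxmem⟩)
    have h0 := hquad (fun i => IncidenceAlgebra.mu ℝ i.1 x)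
    have hdot : dotProduct (star (fun i : ↥(Finset.Icc (⊥ : P) x)
          => IncidenceAlgebra.mu ℝ i.1 x))
        ((Matrix.of (fun (i j : ↥(Finset.Icc (⊥ : P) x)) => f (i.1 ⊓ j.1))).mulVec
          (fun i => IncidenceAlgebra.mu ℝ i.1 x))
        = ∑ i ∈ Finset.Icc (⊥ : P) x, ∑ j ∈ Finset.Icc (⊥ : P) x,
            IncidenceAlgebra.mu ℝ i x * (f (i ⊓ j) * IncidenceAlgebra.mu ℝ j x) := by
      simp only [dotProduct, Matrix.mulVec, dotProduct, Pi.star_apply,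
        star_trivial, Matrix.of_apply]
      rw [← Finset.sum_coe_sort (Finset.Icc (⊥ : P) x)]
      refine Finset.sum_congr rfl fun i _ => ?_
      rw [Finset.mul_sum, ← Finset.sum_coe_sort (Finset.Icc (⊥ : P) x)]
    rw [hdot, quad_form] at h0
    have hbi : (Finset.Icc (⊥ : P) x).biUnion (fun s => Finset.Icc ⊥ s)
        = Finset.Icc (⊥ : P) x := by
      ext z
      simp only [Finset.mem_biUnion, Finset.mem_Icc, bot_le, true_and]
      exact ⟨fun ⟨s, hs, hzs⟩ => hzs.trans hs, fun h => ⟨x, le_rfl, h⟩⟩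
    rw [hbi] at h0
    have hfil : ∀ z ∈ Finset.Icc (⊥ : P) x,
        ((Finset.Icc (⊥ : P) x).filter (fun i => z ≤ i)) = Finset.Icc z x := by
      intro z _
      ext i
      simp only [Finset.mem_filter, Finset.mem_Icc, bot_le, true_and]
      tauto
    have : ∀ z ∈ Finset.Icc (⊥ : P) x,
        (∑ y ∈ Finset.Icc (⊥ : P) z, f y * IncidenceAlgebra.mu ℝ y z) *
          (∑ i ∈ (Finset.Icc (⊥ : P) x).filter (fun i => z ≤ i),
            IncidenceAlgebra.mu ℝ i x) ^ 2
        = if z = x then (∑ y ∈ Finset.Icc (⊥ : P) x, f y * IncidenceAlgebra.mu ℝ y x) else 0 := by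
      intro z hz
      rw [hfil z hz, sum_mu_right]
      split_ifs with h
      · subst h; ring
      · ring
    rw [Finset.sum_congr rfl this, Finset.sum_ite_eq' _ x, if_pos (Finset.mem_Icc.2 ⟨bot_le, le_rfl⟩)] at h0
    exact h0
  · intro hg T hT
    refine Matrix.posSemidef_iff_dotProduct_mulVec.mpr ⟨?_, ?_⟩
    · ext i j
      simp only [Matrix.conjTranspose_apply, Matrix.of_apply, star_trivial]
      rw [inf_comm]
    · intro v
      have hdot : dotProduct (star v)
          ((Matrix.of (fun (i j : ↥T) => f (i.1 ⊓ j.1))).mulVec v)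
          = ∑ i ∈ T, ∑ j ∈ T,
              (fun p => if hp : p ∈ T then v ⟨p, hp⟩ else 0) i *
                (f (i ⊓ j) * (fun p => if hp : p ∈ T then v ⟨p, hp⟩ else 0) j) := by
        simp only [dotProduct, Matrix.mulVec, dotProduct, Pi.star_apply,
          star_trivial, Matrix.of_apply]
        rw [← Finset.sum_coe_sort T]
        refine Finset.sum_congr rfl fun i _ => ?_
        rw [Finset.mul_sum, ← Finset.sum_coe_sort T]
        refine Finset.sum_congr rfl fun j _ => ?_
        rw [dif_pos i.2, dif_pos j.2]
      rw [hdot, quad_form]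
      refine Finset.sum_nonneg fun z _ => mul_nonneg (hg z) (sq_nonneg _)
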